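/- Let m ≥ n ≥ 1, let Σ_μ ∈ ℝ^{m×m} and Σ_ν ∈ ℝ^{n×n} be symmetric positive definite matrices with spectral decompositions Σ_μ = P_μᵀ D_μ P_μ and Σ_ν = P_νᵀ D_ν P_ν, where P_μ, P_ν are orthogonal and D_μ, D_ν are diagonal with nonincreasing positive diagonal entries, and let (D_μ)_{≤n} ∈ ℝ^{n×n} be the top-left n×n block of D_μ. Let Ĩ ∈ ℝ^{n×n} be any diagonal matrix with diagonal entries ±1, let A = (Ĩ D_ν^{1/2} ((D_μ)_{≤n})^{−1/2} , 0) ∈ ℝ^{n×m}, and define the linear map T*(x) = P_νᵀ A P_μ x. Then the pushforward of N(0, Σ_μ) under T* equals N(0, Σ_ν). -/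

import Mathlib

open MeasureTheory ProbabilityTheory Matrix
open scoped ENNReal NNReal

noncomputable section

/-- The centered Gaussian measure `N(0, S)` on `ℝ^d`, realized as the pushforward of the
standard Gaussian by multiplication with the positive semidefinite square root of `S`. -/
def gaussianN {d : ℕ} (S : Matrix (Fin d) (Fin d) ℝ) (hS : S.PosSemidef) :
    Measure (Fin d → ℝ) :=
  (Measure.pi fun _ : Fin d => gaussianReal 0 1).map fun x =>
    ((hS.1.eigenvectorUnitary : Matrix (Fin d) (Fin d) ℝ) *
      diagonal (Real.sqrt ∘ hS.1.eigenvalues) *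
      (star hS.1.eigenvectorUnitary : Matrix (Fin d) (Fin d) ℝ)).mulVec x

/-- The top-left `n×n` block of an `m×m` matrix. -/
def topBlock {m n : ℕ} (hnm : n ≤ m) (D : Matrix (Fin m) (Fin m) ℝ) :
    Matrix (Fin n) (Fin n) ℝ :=
  Matrix.of fun i j => D (Fin.castLE hnm i) (Fin.castLE hnm j)

/-- Entrywise square root (for a diagonal matrix, the diagonal matrix of square roots). -/
def sqrtDiag {k : ℕ} (D : Matrix (Fin k) (Fin k) ℝ) : Matrix (Fin k) (Fin k) ℝ :=
  Matrix.of fun i j => Real.sqrt (D i j)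

/-- Entrywise inverse square root (for a positive definite diagonal matrix, the diagonal
matrix of inverse square roots; off-diagonal zeros are sent to `(√0)⁻¹ = 0`). -/
def invSqrtDiag {k : ℕ} (D : Matrix (Fin k) (Fin k) ℝ) : Matrix (Fin k) (Fin k) ℝ :=
  Matrix.of fun i j => (Real.sqrt (D i j))⁻¹

/-- Pad an `n×n` matrix with `m − n` zero columns to get an `n×m` matrix. -/
def padCols {n m : ℕ} (hnm : n ≤ m) (B : Matrix (Fin n) (Fin n) ℝ) :
    Matrix (Fin n) (Fin m) ℝ :=
  Matrix.of fun i j => if h : (j : ℕ) < n then B i ⟨(j : ℕ), h⟩ else 0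

abbrev stdG (d : ℕ) : Measure (Fin d → ℝ) := Measure.pi fun _ : Fin d => gaussianReal 0 1

lemma measurable_mulVec {a b : ℕ} (M : Matrix (Fin a) (Fin b) ℝ) :
    Measurable fun x : Fin b → ℝ => M.mulVec x := by
  refine measurable_pi_lambda _ fun i => ?_
  simp only [Matrix.mulVec, dotProduct]
  exact Finset.measurable_sum _ fun j _ => (measurable_pi_apply j).const_mul _

lemma lintegral_pi_prod : ∀ (d : ℕ) (f : Fin d → ℝ → ℝ≥0∞), (∀ i, Measurable (f i)) →
    ∫⁻ x : Fin d → ℝ, ∏ i, f i (x i) ∂(Measure.pi fun _ => (volume : Measure ℝ))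
      = ∏ i, ∫⁻ y, f i y := by
  intro d
  induction d with
  | zero =>
    intro f _
    simp [Measure.pi_of_empty (fun _ : Fin 0 => (volume : Measure ℝ))]
  | succ d ih =>
    intro f hf
    have h := measurePreserving_piFinSuccAbove (fun _ : Fin (d + 1) => (volume : Measure ℝ)) 0
    have hG : Measurable fun p : ℝ × (Fin d → ℝ) => f 0 p.1 * ∏ j, f j.succ (p.2 j) := by
      refine ((hf 0).comp measurable_fst).mul ?_
      exact (Finset.measurable_prod _ fun j _ =>
        (hf (Fin.succ j)).comp (measurable_pi_apply j)).comp measurable_snd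
    have key := h.lintegral_comp hG
    have hcomp : ∀ x : Fin (d + 1) → ℝ,
        (fun p : ℝ × (Fin d → ℝ) => f 0 p.1 * ∏ j, f j.succ (p.2 j))
          ((MeasurableEquiv.piFinSuccAbove (fun _ => ℝ) 0) x) = ∏ i, f i (x i) := by
      intro x
      rw [Fin.prod_univ_succ]
      simp [MeasurableEquiv.piFinSuccAbove, Fin.succAbove_zero, Fin.tail]
    simp_rw [hcomp] at key
    have hg : Measurable fun y : Fin d → ℝ => ∏ j, f (Fin.succ j) (y j) :=
      Finset.measurable_prod _ fun j _ => (hf (Fin.succ j)).comp (measurable_pi_apply j)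
    rw [Fin.prod_univ_succ, ← ih (fun j => f j.succ) (fun j => hf j.succ), key,
      lintegral_prod_mul (hf 0).aemeasurable hg.aemeasurable]

lemma stdG_eq (d : ℕ) :
    stdG d = (Measure.pi fun _ : Fin d => (volume : Measure ℝ)).withDensity
      (fun x => ∏ i, gaussianPDF 0 1 (x i)) := by
  refine Measure.pi_eq (μ := fun _ : Fin d => gaussianReal 0 1) fun s hs => ?_
  rw [withDensity_apply _ (MeasurableSet.univ_pi hs), ← lintegral_indicator
    (MeasurableSet.univ_pi hs) _]
  have hind : ∀ x : Fin d → ℝ,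
      (Set.univ.pi s).indicator (fun x => ∏ i, gaussianPDF 0 1 (x i)) x
        = ∏ i, (s i).indicator (gaussianPDF 0 1) (x i) := by
    intro x
    by_cases h : x ∈ Set.univ.pi s
    · rw [Set.indicator_of_mem h]
      refine Finset.prod_congr rfl fun i _ => ?_
      rw [Set.indicator_of_mem (h i (Set.mem_univ i))]
    · rw [Set.indicator_of_notMem h]
      rw [Set.mem_pi] at h
      push_neg at h
      obtain ⟨i, _, hi⟩ := h
      exact (Finset.prod_eq_zero (Finset.mem_univ i)
        (by rw [Set.indicator_of_notMem hi])).symm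
  simp_rw [hind]
  rw [lintegral_pi_prod d _ fun i => (measurable_gaussianPDF 0 1).indicator (hs i)]
  refine Finset.prod_congr rfl fun i _ => ?_
  rw [lintegral_indicator (hs i) _, ← gaussianReal_apply 0 one_ne_zero]

lemma map_withDensity_equiv {α β : Type*} [MeasurableSpace α] [MeasurableSpace β]
    (μ : Measure α) (e : α ≃ᵐ β) {f : α → ℝ≥0∞} (hf : Measurable f) :
    (μ.withDensity f).map e = (μ.map e).withDensity (f ∘ e.symm) := by
  ext s hs
  rw [Measure.map_apply e.measurable hs, withDensity_apply _ (e.measurable hs),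
    withDensity_apply _ hs, setLIntegral_map hs (hf.comp e.symm.measurable) e.measurable]
  simp only [Function.comp_apply, MeasurableEquiv.symm_apply_apply]

def mulVecEquiv {d : ℕ} (Q : Matrix (Fin d) (Fin d) ℝ) (hQ : IsUnit Q.det) :
    (Fin d → ℝ) ≃ᵐ (Fin d → ℝ) where
  toFun := Q.mulVec
  invFun := Q⁻¹.mulVec
  left_inv := fun x => by
    rw [Matrix.mulVec_mulVec, Matrix.nonsing_inv_mul _ hQ, Matrix.one_mulVec]
  right_inv := fun x => by
    rw [Matrix.mulVec_mulVec, Matrix.mul_nonsing_inv _ hQ, Matrix.one_mulVec]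
  measurable_toFun := measurable_mulVec Q
  measurable_invFun := measurable_mulVec Q⁻¹

lemma prod_pdf_comp {d : ℕ} (Q : Matrix (Fin d) (Fin d) ℝ) (hQ : Qᵀ * Q = 1)
    (x : Fin d → ℝ) :
    ∏ i, gaussianPDF 0 1 (Q.mulVec x i) = ∏ i, gaussianPDF 0 1 (x i) := by
  have key : ∀ v : Fin d → ℝ, ∏ i, gaussianPDFReal 0 1 (v i)
      = (Real.sqrt (2 * Real.pi))⁻¹ ^ d * Real.exp (∑ i, -(v i) ^ 2 / 2) := by
    intro v
    simp only [gaussianPDFReal, sub_zero, NNReal.coe_one, mul_one]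
    rw [Finset.prod_mul_distrib, Finset.prod_const, ← Real.exp_sum]
    simp
  have hsum : ∑ i, (Q.mulVec x i) ^ 2 = ∑ i, (x i) ^ 2 := by
    have h1 : (Q.mulVec x) ⬝ᵥ (Q.mulVec x) = x ⬝ᵥ x := by
      rw [Matrix.dotProduct_mulVec, ← Matrix.mulVec_transpose,
        Matrix.mulVec_mulVec, hQ, Matrix.one_mulVec]
    simpa [dotProduct, pow_two] using h1
  simp only [gaussianPDF]
  rw [← ENNReal.ofReal_prod_of_nonneg (fun i _ => gaussianPDFReal_nonneg 0 1 _),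
    ← ENNReal.ofReal_prod_of_nonneg (fun i _ => gaussianPDFReal_nonneg 0 1 _),
    key, key]
  have hneg : ∑ i, -(Q.mulVec x i) ^ 2 = ∑ i, -(x i) ^ 2 := by
    rw [Finset.sum_neg_distrib, Finset.sum_neg_distrib, hsum]
  have : ∑ i, -(Q.mulVec x i) ^ 2 / 2 = ∑ i, -(x i) ^ 2 / 2 := by
    rw [← Finset.sum_div, ← Finset.sum_div, hneg]
  rw [this]

lemma map_rot {d : ℕ} (Q : Matrix (Fin d) (Fin d) ℝ) (hQ : Qᵀ * Q = 1) :
    (stdG d).map (fun x => Q.mulVec x) = stdG d := by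
  have hdet : Q.det * Q.det = 1 := by
    have := congrArg Matrix.det hQ
    rwa [Matrix.det_mul, Matrix.det_transpose, Matrix.det_one] at this
  have hunit : IsUnit Q.det := IsUnit.of_mul_eq_one _ hdet
  have hdet1 : |Q.det⁻¹| = 1 := by
    rcases mul_self_eq_one_iff.mp hdet with h | h <;> rw [h] <;> norm_num
  set F : (Fin d → ℝ) → ℝ≥0∞ := fun x => ∏ i, gaussianPDF 0 1 (x i) with hF
  have hFmeas : Measurable F :=
    Finset.measurable_prod _ fun i _ =>
      (measurable_gaussianPDF 0 1).comp (measurable_pi_apply i)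
  have he : (fun x : Fin d → ℝ => Q.mulVec x) = ⇑(mulVecEquiv Q hunit) := rfl
  rw [stdG_eq, he, map_withDensity_equiv _ _ hFmeas]
  have hmapvol : (Measure.pi fun _ : Fin d => (volume : Measure ℝ)).map
      (mulVecEquiv Q hunit) = Measure.pi fun _ : Fin d => (volume : Measure ℝ) := by
    have h := Real.map_matrix_volume_pi_eq_smul_volume_pi (M := Q) hunit.ne_zero
    rw [hdet1, ENNReal.ofReal_one, one_smul] at h
    have hco : ⇑(mulVecEquiv Q hunit) = ⇑Q.toLin' :=
      funext fun x => (Matrix.toLin'_apply Q x).symm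
    rw [← volume_pi, hco]
    exact h
  rw [hmapvol]
  have hFcomp : F ∘ ⇑(mulVecEquiv Q hunit).symm = F := by
    funext y
    have h1 : F (Q.mulVec ((mulVecEquiv Q hunit).symm y)) =
        F ((mulVecEquiv Q hunit).symm y) := prod_pdf_comp Q hQ _
    have h2 : Q.mulVec ((mulVecEquiv Q hunit).symm y) = y :=
      (mulVecEquiv Q hunit).apply_symm_apply y
    calc F ((mulVecEquiv Q hunit).symm y) = F (Q.mulVec ((mulVecEquiv Q hunit).symm y)) :=
          h1.symm
      _ = F y := by rw [h2]
  rw [hFcomp, ← stdG_eq]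

lemma map_proj_stdG {m n : ℕ} (hnm : n ≤ m) :
    (stdG m).map (fun x (i : Fin n) => x (Fin.castLE hnm i)) = stdG n := by
  set k := m - n with hk
  have hmk : n + k = m := Nat.add_sub_cancel' hnm
  let e : Fin n ⊕ Fin k ≃ Fin m := finSumFinEquiv.trans (finCongr hmk)
  have h1 : MeasurePreserving (MeasurableEquiv.piCongrLeft (fun _ : Fin m => ℝ) e)
      (Measure.pi fun _ : Fin n ⊕ Fin k => gaussianReal 0 1) (stdG m) :=
    measurePreserving_piCongrLeft (fun _ : Fin m => gaussianReal 0 1) e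
  have h2 : MeasurePreserving (MeasurableEquiv.sumPiEquivProdPi (fun _ : Fin n ⊕ Fin k => ℝ))
      (Measure.pi fun _ : Fin n ⊕ Fin k => gaussianReal 0 1) ((stdG n).prod (stdG k)) :=
    measurePreserving_sumPiEquivProdPi (fun _ => gaussianReal 0 1)
  have hdecomp : (fun x (i : Fin n) => x (Fin.castLE hnm i)) =
      (Prod.fst ∘ ⇑(MeasurableEquiv.sumPiEquivProdPi (fun _ : Fin n ⊕ Fin k => ℝ))) ∘
        ⇑(MeasurableEquiv.piCongrLeft (fun _ : Fin m => ℝ) e).symm := by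
    funext x
    funext i
    have he : e (Sum.inl i) = Fin.castLE hnm i := by
      simp only [e, Equiv.trans_apply, finSumFinEquiv_apply_left, finCongr_apply]
      ext
      simp
    rw [← he]
    rfl
  rw [hdecomp, ← Measure.map_map (measurable_fst.comp
      (MeasurableEquiv.sumPiEquivProdPi (fun _ : Fin n ⊕ Fin k => ℝ)).measurable)
      (MeasurableEquiv.piCongrLeft (fun _ : Fin m => ℝ) e).symm.measurable,
    h1.symm (MeasurableEquiv.piCongrLeft (fun _ : Fin m => ℝ) e) |>.map_eq,
    ← Measure.map_map measurable_fst
      (MeasurableEquiv.sumPiEquivProdPi (fun _ : Fin n ⊕ Fin k => ℝ)).measurable,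
    h2.map_eq, Measure.map_fst_prod]
  simp

lemma exists_orth_extension {m n : ℕ} (hnm : n ≤ m) (Q : Matrix (Fin n) (Fin m) ℝ)
    (hQ : Q * Qᵀ = 1) :
    ∃ R : Matrix (Fin m) (Fin m) ℝ, R * Rᵀ = 1 ∧
      ∀ i : Fin n, R (Fin.castLE hnm i) = Q i := by
  classical
  set v : Fin m → EuclideanSpace ℝ (Fin m) :=
    fun i => if h : (i : ℕ) < n then WithLp.toLp 2 (fun j => Q ⟨(i : ℕ), h⟩ j) else 0 with hv
  set s : Set (Fin m) := {i | (i : ℕ) < n} with hs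
  have hortho : Orthonormal ℝ (s.restrict v) := by
    rw [orthonormal_iff_ite]
    rintro ⟨i, hi⟩ ⟨j, hj⟩
    have hi' : (i : ℕ) < n := hi
    have hj' : (j : ℕ) < n := hj
    have hvi : s.restrict v ⟨i, hi⟩ = WithLp.toLp 2 (fun l => Q ⟨(i : ℕ), hi'⟩ l) := by
      exact dif_pos hi'
    have hvj : s.restrict v ⟨j, hj⟩ = WithLp.toLp 2 (fun l => Q ⟨(j : ℕ), hj'⟩ l) := by
      exact dif_pos hj'
    have hinner : (inner ℝ (s.restrict v ⟨i, hi⟩) (s.restrict v ⟨j, hj⟩) : ℝ)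
        = (Q * Qᵀ) ⟨(i : ℕ), hi'⟩ ⟨(j : ℕ), hj'⟩ := by
      rw [hvi, hvj]
      simp [PiLp.inner_apply, Matrix.mul_apply, mul_comm]
    rw [hinner, hQ, Matrix.one_apply]
    congr 1
    simp [Subtype.ext_iff, Fin.ext_iff]
  have hcard : Module.finrank ℝ (EuclideanSpace ℝ (Fin m)) = Fintype.card (Fin m) := by
    simp
  obtain ⟨b, hb⟩ := hortho.exists_orthonormalBasis_extension_of_card_eq hcard
  refine ⟨Matrix.of fun i j => b i j, ?_, ?_⟩
  · ext i j
    have := (orthonormal_iff_ite.mp b.orthonormal) i j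
    simp only [PiLp.inner_apply, RCLike.inner_apply, conj_trivial] at this
    simp only [Matrix.mul_apply, Matrix.transpose_apply, Matrix.of_apply, Matrix.one_apply]
    rw [← this]
    exact Finset.sum_congr rfl fun _ _ => mul_comm _ _
  · intro i
    have hmem : Fin.castLE hnm i ∈ s := by
      simp only [hs, Set.mem_setOf_eq, Fin.coe_castLE]
      exact i.isLt
    have := hb (Fin.castLE hnm i) hmem
    funext j
    have hfin : (⟨((Fin.castLE hnm i : Fin m) : ℕ), by simpa using i.isLt⟩ : Fin n) = i := by
      ext; simp
    simp only [Matrix.of_apply, this, hv, WithLp.ofLp_toLp, dif_pos (show ((Fin.castLE hnm i : Fin m) : ℕ) < n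
      from by simpa using i.isLt)]
    rw [show (⟨((Fin.castLE hnm i : Fin m) : ℕ), _⟩ : Fin n) = i from hfin]

lemma map_semiOrth {m n : ℕ} (hnm : n ≤ m) (Q : Matrix (Fin n) (Fin m) ℝ)
    (hQ : Q * Qᵀ = 1) :
    (stdG m).map (fun x => Q.mulVec x) = stdG n := by
  obtain ⟨R, hR, hrow⟩ := exists_orth_extension hnm Q hQ
  have hRo : Rᵀ * R = 1 := mul_eq_one_comm.mp hR
  have hcomp : (fun x => Q.mulVec x) =
      (fun y (i : Fin n) => y (Fin.castLE hnm i)) ∘ (fun x => R.mulVec x) := by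
    funext x
    funext i
    simp only [Function.comp_apply, Matrix.mulVec, Matrix.of_apply, hrow i]
  rw [hcomp, ← Measure.map_map
    (measurable_pi_lambda _ fun i => measurable_pi_apply _) (measurable_mulVec R),
    map_rot R hRo, map_proj_stdG hnm]


lemma sqrtDiag_diagonal {k : ℕ} (d : Fin k → ℝ) :
    sqrtDiag (Matrix.diagonal d) = Matrix.diagonal fun i => Real.sqrt (d i) := by
  ext i j
  by_cases h : i = j
  · subst h; simp [sqrtDiag]
  · simp [sqrtDiag, Matrix.diagonal_apply_ne _ h]

lemma invSqrtDiag_diagonal {k : ℕ} (d : Fin k → ℝ) :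
    invSqrtDiag (Matrix.diagonal d) = Matrix.diagonal fun i => (Real.sqrt (d i))⁻¹ := by
  ext i j
  by_cases h : i = j
  · subst h; simp [invSqrtDiag]
  · simp [invSqrtDiag, Matrix.diagonal_apply_ne _ h]

lemma topBlock_diagonal {m n : ℕ} (hnm : n ≤ m) (d : Fin m → ℝ) :
    topBlock hnm (Matrix.diagonal d) =
      Matrix.diagonal fun i => d (Fin.castLE hnm i) := by
  ext i j
  by_cases h : i = j
  · subst h; simp [topBlock]
  · have : Fin.castLE hnm i ≠ Fin.castLE hnm j := by
      simp [Fin.ext_iff] at h ⊢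
      exact h
    simp [topBlock, Matrix.diagonal_apply_ne _ h, Matrix.diagonal_apply_ne _ this]

lemma padCols_diagonal_apply {m n : ℕ} (hnm : n ≤ m) (g : Fin n → ℝ) (i : Fin n) (l : Fin m) :
    padCols hnm (Matrix.diagonal g) i l = if (l : ℕ) = (i : ℕ) then g i else 0 := by
  simp only [padCols, Matrix.of_apply]
  by_cases h : (l : ℕ) < n
  · rw [dif_pos h, Matrix.diagonal_apply]
    by_cases h2 : (l : ℕ) = (i : ℕ)
    · rw [if_pos h2, if_pos (by ext; exact h2.symm)]
    · rw [if_neg h2, if_neg (by simp [Fin.ext_iff]; exact fun hh => h2 hh.symm)]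
  · rw [dif_neg h, if_neg (by omega)]

lemma padCols_diag_sandwich {m n : ℕ} (hnm : n ≤ m) (g : Fin n → ℝ) (d : Fin m → ℝ) :
    padCols hnm (Matrix.diagonal g) * Matrix.diagonal d *
      (padCols hnm (Matrix.diagonal g))ᵀ =
      Matrix.diagonal fun i => g i * d (Fin.castLE hnm i) * g i := by
  ext i j
  have hX : (padCols hnm (Matrix.diagonal g) * Matrix.diagonal d *
      (padCols hnm (Matrix.diagonal g))ᵀ) i j
      = ∑ l, padCols hnm (Matrix.diagonal g) i l * d l *
          padCols hnm (Matrix.diagonal g) j l := by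
    rw [Matrix.mul_apply]
    refine Finset.sum_congr rfl fun l _ => ?_
    rw [Matrix.mul_diagonal, Matrix.transpose_apply]
  rw [hX, Finset.sum_eq_single (Fin.castLE hnm i)]
  · rw [padCols_diagonal_apply, padCols_diagonal_apply]
    by_cases h : i = j
    · subst h
      simp
    · have hne : ¬ ((Fin.castLE hnm i : ℕ) = (j : ℕ)) := by
        simp only [Fin.coe_castLE]
        exact fun hh => h (Fin.ext hh)
      rw [if_neg hne, Matrix.diagonal_apply_ne _ h, mul_zero]
  · intro l _ hl
    rw [padCols_diagonal_apply, if_neg, zero_mul, zero_mul]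
    intro hval
    exact hl (by ext; simpa using hval)
  · intro h
    exact absurd (Finset.mem_univ _) h

lemma gaussSqrt_props {d : ℕ} (S : Matrix (Fin d) (Fin d) ℝ) (hS : S.PosSemidef) :
    ((hS.1.eigenvectorUnitary : Matrix (Fin d) (Fin d) ℝ) *
      diagonal (Real.sqrt ∘ hS.1.eigenvalues) *
      (star hS.1.eigenvectorUnitary : Matrix (Fin d) (Fin d) ℝ))ᵀ =
    ((hS.1.eigenvectorUnitary : Matrix (Fin d) (Fin d) ℝ) *
      diagonal (Real.sqrt ∘ hS.1.eigenvalues) *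
      (star hS.1.eigenvectorUnitary : Matrix (Fin d) (Fin d) ℝ)) ∧
    ((hS.1.eigenvectorUnitary : Matrix (Fin d) (Fin d) ℝ) *
      diagonal (Real.sqrt ∘ hS.1.eigenvalues) *
      (star hS.1.eigenvectorUnitary : Matrix (Fin d) (Fin d) ℝ)) *
    ((hS.1.eigenvectorUnitary : Matrix (Fin d) (Fin d) ℝ) *
      diagonal (Real.sqrt ∘ hS.1.eigenvalues) *
      (star hS.1.eigenvectorUnitary : Matrix (Fin d) (Fin d) ℝ)) = S := by
  have hsU : star (hS.1.eigenvectorUnitary : Matrix (Fin d) (Fin d) ℝ) =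
      (hS.1.eigenvectorUnitary : Matrix (Fin d) (Fin d) ℝ)ᵀ := by
    rw [star_eq_conjTranspose, conjTranspose_eq_transpose_of_trivial]
  have hUU : (hS.1.eigenvectorUnitary : Matrix (Fin d) (Fin d) ℝ)ᵀ *
      (hS.1.eigenvectorUnitary : Matrix (Fin d) (Fin d) ℝ) = 1 := by
    rw [← hsU]; exact Unitary.coe_star_mul_self _
  have hev : 0 ≤ hS.1.eigenvalues := (hS.1.posSemidef_iff_eigenvalues_nonneg).mp hS
  have hspec := hS.1.spectral_theorem
  simp only [Unitary.conjStarAlgAut_apply, Unitary.coe_star] at hspec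
  rw [hsU] at hspec
  rw [hsU]
  constructor
  · rw [transpose_mul, transpose_mul, transpose_transpose, diagonal_transpose, Matrix.mul_assoc]
  · have hD : diagonal (fun i => (Real.sqrt ∘ hS.1.eigenvalues) i *
        (Real.sqrt ∘ hS.1.eigenvalues) i) = diagonal (RCLike.ofReal ∘ hS.1.eigenvalues) := by
      congr 1; funext i; simp [Real.mul_self_sqrt (hev i)]
    conv_rhs => rw [hspec]
    simp only [Matrix.mul_assoc]
    rw [← Matrix.mul_assoc _ _ (diagonal (Real.sqrt ∘ hS.1.eigenvalues) * _), hUU,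
      Matrix.one_mul, ← Matrix.mul_assoc (diagonal _) (diagonal _), diagonal_mul_diagonal, hD]

/-- the map `T*(x) = P_νᵀ A P_μ x`, with
`A = (Ĩ D_ν^{1/2} ((D_μ)_{≤n})^{−1/2}, 0)`, pushes `N(0, Σ_μ)` forward to `N(0, Σ_ν)`. -/
theorem gaussian_pushforward {m n : ℕ} (hn : 1 ≤ n) (hnm : n ≤ m)
    (Sμ Pμ Dμ : Matrix (Fin m) (Fin m) ℝ) (Sν Pν Dν : Matrix (Fin n) (Fin n) ℝ)
    (hSμ : Sμ.PosDef) (hSν : Sν.PosDef)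
    (hPμ : Pμᵀ * Pμ = 1) (hPν : Pνᵀ * Pν = 1)
    (hDμdiag : Dμ.IsDiag) (hDνdiag : Dν.IsDiag)
    (hDμpos : ∀ i, 0 < Dμ i i) (hDνpos : ∀ i, 0 < Dν i i)
    (hDμmono : ∀ i j : Fin m, i ≤ j → Dμ j j ≤ Dμ i i)
    (hDνmono : ∀ i j : Fin n, i ≤ j → Dν j j ≤ Dν i i)
    (hμdec : Sμ = Pμᵀ * Dμ * Pμ) (hνdec : Sν = Pνᵀ * Dν * Pν)
    (Itld : Matrix (Fin n) (Fin n) ℝ) (hItld : Itld.IsDiag)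
    (hIpm : ∀ i, Itld i i = 1 ∨ Itld i i = -1) :
    (gaussianN Sμ hSμ.posSemidef).map
        (fun x => (Pνᵀ * padCols hnm (Itld * sqrtDiag Dν * invSqrtDiag (topBlock hnm Dμ))
          * Pμ).mulVec x)
      = gaussianN Sν hSν.posSemidef := by
  classical
  set g : Fin n → ℝ := fun i => Itld i i * Real.sqrt (Dν i i) *
    (Real.sqrt (Dμ (Fin.castLE hnm i) (Fin.castLE hnm i)))⁻¹ with hg
  have hG : Itld * sqrtDiag Dν * invSqrtDiag (topBlock hnm Dμ) = Matrix.diagonal g := by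
    conv_lhs => rw [← hItld.diagonal_diag, ← hDνdiag.diagonal_diag, ← hDμdiag.diagonal_diag]
    rw [sqrtDiag_diagonal, topBlock_diagonal, invSqrtDiag_diagonal,
      Matrix.diagonal_mul_diagonal, Matrix.diagonal_mul_diagonal]
    rfl
  set A' : Matrix (Fin n) (Fin m) ℝ :=
    padCols hnm (Itld * sqrtDiag Dν * invSqrtDiag (topBlock hnm Dμ)) with hA'
  have hAD : A' * Dμ * A'ᵀ = Dν := by
    conv_lhs => rw [hA', hG, ← hDμdiag.diagonal_diag]
    rw [padCols_diag_sandwich]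
    conv_rhs => rw [← hDνdiag.diagonal_diag]
    refine congrArg Matrix.diagonal (funext fun i => ?_)
    have hμpos : (0 : ℝ) < Dμ (Fin.castLE hnm i) (Fin.castLE hnm i) := hDμpos _
    have hs : Real.sqrt (Dμ (Fin.castLE hnm i) (Fin.castLE hnm i)) *
        Real.sqrt (Dμ (Fin.castLE hnm i) (Fin.castLE hnm i)) =
        Dμ (Fin.castLE hnm i) (Fin.castLE hnm i) := Real.mul_self_sqrt hμpos.le
    have hsne : Real.sqrt (Dμ (Fin.castLE hnm i) (Fin.castLE hnm i)) ≠ 0 :=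
      ne_of_gt (Real.sqrt_pos.mpr hμpos)
    have hν : Real.sqrt (Dν i i) * Real.sqrt (Dν i i) = Dν i i :=
      Real.mul_self_sqrt (hDνpos i).le
    have ht : Itld i i * Itld i i = 1 := by
      rcases hIpm i with h | h <;> rw [h] <;> norm_num
    simp only [Matrix.diag_apply, hg]
    rw [show Itld i i * Real.sqrt (Dν i i) *
          (Real.sqrt (Dμ (Fin.castLE hnm i) (Fin.castLE hnm i)))⁻¹ *
          Dμ (Fin.castLE hnm i) (Fin.castLE hnm i) *
          (Itld i i * Real.sqrt (Dν i i) *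
            (Real.sqrt (Dμ (Fin.castLE hnm i) (Fin.castLE hnm i)))⁻¹)
        = (Itld i i * Itld i i) * (Real.sqrt (Dν i i) * Real.sqrt (Dν i i)) *
          (((Real.sqrt (Dμ (Fin.castLE hnm i) (Fin.castLE hnm i)))⁻¹ *
              (Real.sqrt (Dμ (Fin.castLE hnm i) (Fin.castLE hnm i)))⁻¹) *
            Dμ (Fin.castLE hnm i) (Fin.castLE hnm i)) from by ring]
    rw [ht, hν]
    conv_lhs => rw [← hs]
    field_simp
    rw [Real.sqrt_sq (Real.sqrt_nonneg _)]
  set M : Matrix (Fin n) (Fin m) ℝ := Pνᵀ * A' * Pμ with hM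
  have hPμ' : Pμ * Pμᵀ = 1 := mul_eq_one_comm.mp hPμ
  have hMSM : M * Sμ * Mᵀ = Sν := by
    rw [hμdec, hM]
    simp only [Matrix.transpose_mul, Matrix.transpose_transpose, Matrix.mul_assoc]
    rw [show Pμ * (Pμᵀ * (Dμ * (Pμ * (Pμᵀ * (A'ᵀ * Pν)))))
        = (Pμ * Pμᵀ) * (Dμ * ((Pμ * Pμᵀ) * (A'ᵀ * Pν))) from by
      simp only [Matrix.mul_assoc], hPμ', Matrix.one_mul, Matrix.one_mul,
      show A' * (Dμ * (A'ᵀ * Pν)) = (A' * Dμ * A'ᵀ) * Pν from by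
        simp only [Matrix.mul_assoc], hAD, hνdec, Matrix.mul_assoc]
  set Cμ : Matrix (Fin m) (Fin m) ℝ :=
    (hSμ.posSemidef.1.eigenvectorUnitary : Matrix (Fin m) (Fin m) ℝ) *
      diagonal (Real.sqrt ∘ hSμ.posSemidef.1.eigenvalues) *
      (star hSμ.posSemidef.1.eigenvectorUnitary : Matrix (Fin m) (Fin m) ℝ) with hCμ
  set C : Matrix (Fin n) (Fin n) ℝ :=
    (hSν.posSemidef.1.eigenvectorUnitary : Matrix (Fin n) (Fin n) ℝ) *
      diagonal (Real.sqrt ∘ hSν.posSemidef.1.eigenvalues) *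
      (star hSν.posSemidef.1.eigenvectorUnitary : Matrix (Fin n) (Fin n) ℝ) with hC
  have hCμT : Cμᵀ = Cμ := (gaussSqrt_props Sμ hSμ.posSemidef).1
  have hCT : Cᵀ = C := (gaussSqrt_props Sν hSν.posSemidef).1
  have hCμ2 : Cμ * Cμ = Sμ := (gaussSqrt_props Sμ hSμ.posSemidef).2
  have hC2 : C * C = Sν := (gaussSqrt_props Sν hSν.posSemidef).2
  set B : Matrix (Fin n) (Fin m) ℝ := M * Cμ with hB
  have hBB : B * Bᵀ = Sν := by
    rw [hB, Matrix.transpose_mul, hCμT, show M * Cμ * (Cμ * Mᵀ) = M * (Cμ * Cμ) * Mᵀ from by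
      simp only [Matrix.mul_assoc], hCμ2, hMSM]
  have hCC : C * Cᵀ = Sν := by rw [hCT, hC2]
  have hCdet : IsUnit C.det := by
    rw [isUnit_iff_ne_zero]
    intro h
    have := congrArg Matrix.det hC2
    rw [Matrix.det_mul, h, mul_zero] at this
    exact (ne_of_gt hSν.det_pos) this.symm
  have hCTdet : IsUnit Cᵀ.det := by rwa [Matrix.det_transpose]
  set Q : Matrix (Fin n) (Fin m) ℝ := C⁻¹ * B with hQdef
  have hQ : Q * Qᵀ = 1 := by
    rw [hQdef, Matrix.transpose_mul, Matrix.transpose_nonsing_inv,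
      show C⁻¹ * B * (Bᵀ * Cᵀ⁻¹) = C⁻¹ * ((B * Bᵀ) * Cᵀ⁻¹) from by
        simp only [Matrix.mul_assoc], hBB, ← hCC,
      show C⁻¹ * (C * Cᵀ * Cᵀ⁻¹) = C⁻¹ * (C * (Cᵀ * Cᵀ⁻¹)) from by
        simp only [Matrix.mul_assoc], Matrix.mul_nonsing_inv _ hCTdet, Matrix.mul_one,
      Matrix.nonsing_inv_mul _ hCdet]
  have hBCQ : B = C * Q := by
    rw [hQdef, ← Matrix.mul_assoc, Matrix.mul_nonsing_inv _ hCdet, Matrix.one_mul]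
  rw [gaussianN, gaussianN,
    Measure.map_map (measurable_mulVec M) (measurable_mulVec _)]
  have h1 : ((fun x => M.mulVec x) ∘ (fun x =>
      ((hSμ.posSemidef.1.eigenvectorUnitary : Matrix (Fin m) (Fin m) ℝ) *
      diagonal (Real.sqrt ∘ hSμ.posSemidef.1.eigenvalues) *
      (star hSμ.posSemidef.1.eigenvectorUnitary : Matrix (Fin m) (Fin m) ℝ)).mulVec x))
      = fun x => (C * Q).mulVec x := by
    funext x
    rw [Function.comp_apply, Matrix.mulVec_mulVec, ← hCμ, ← hB, hBCQ]
  rw [h1]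
  have h2 : (fun x : Fin m → ℝ => (C * Q).mulVec x)
      = (fun y => C.mulVec y) ∘ (fun x => Q.mulVec x) := by
    funext x
    rw [Function.comp_apply, Matrix.mulVec_mulVec]
  rw [h2, ← Measure.map_map (measurable_mulVec C) (measurable_mulVec Q),
    map_semiOrth hnm Q hQ]


end
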